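/- For the epistemic space E² = ⟨𝓔₂, mod⟩: AGM revision is realizable in E², yet there exists no full meet revision operator for E². -/
import Mathlib


open Set

/-- `minSet r S` is the set of `r`-minimal elements of `S`:
`min(S, r) = {ω ∈ S : r ω ω' for all ω' ∈ S}`. -/
def minSet {Ω : Type*} (r : Ω → Ω → Prop) (S : Set Ω) : Set Ω :=
  {ω ∈ S | ∀ ω' ∈ S, r ω ω'}

/-- A linear order as a relation: total, antisymmetric and transitive. -/
def IsLinRel {Ω : Type*} (r : Ω → Ω → Prop) : Prop :=
  (∀ a b, r a b ∨ r b a) ∧ (∀ a b, r a b → r b a → a = b) ∧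
    (∀ a b c, r a b → r b c → r a c)

/-- AGM contraction operator for the epistemic space `⟨E, md⟩` (postulates C1–C7,
formulated on model sets). -/
def IsContraction {Ω E : Type*} (md : E → Set Ω) (c : E → Set Ω → E) : Prop :=
  ∀ (Ψ : E) (A B : Set Ω),
    md Ψ ⊆ md (c Ψ A) ∧
    (¬ md Ψ ⊆ A → md (c Ψ A) ⊆ md Ψ) ∧
    (A ≠ Set.univ → ¬ md (c Ψ A) ⊆ A) ∧
    md (c Ψ A) ∩ A ⊆ md Ψ ∧
    md (c Ψ (A ∩ B)) ⊆ md (c Ψ A) ∪ md (c Ψ B) ∧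
    (¬ md (c Ψ (A ∩ B)) ⊆ B → md (c Ψ B) ⊆ md (c Ψ (A ∩ B)))

/-- AGM revision operator for the epistemic space `⟨E, md⟩` (postulates R1–R6,
formulated on model sets). -/
def IsRevision {Ω E : Type*} (md : E → Set Ω) (s : E → Set Ω → E) : Prop :=
  ∀ (Ψ : E) (A B : Set Ω),
    md (s Ψ A) ⊆ A ∧
    (md Ψ ∩ A ≠ ∅ → md (s Ψ A) = md Ψ ∩ A) ∧
    (A ≠ ∅ → md (s Ψ A) ≠ ∅) ∧
    md (s Ψ A) ∩ B ⊆ md (s Ψ (A ∩ B)) ∧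
    (md (s Ψ A) ∩ B ≠ ∅ → md (s Ψ (A ∩ B)) ⊆ md (s Ψ A) ∩ B)

/-- Postulate (ZC). -/
def ZC {Ω E : Type*} (md : E → Set Ω) : Prop :=
  ∀ (Ψ : E) (M : Set Ω), md Ψ ⊆ M → ∃ Ψ' : E, md Ψ' = M

/-- Postulate (ZR1). -/
def ZR1 {Ω E : Type*} (md : E → Set Ω) : Prop :=
  ∀ ω : Ω, ∃ Ψ : E, md Ψ = {ω}

/-- Postulate (ZR2). -/
def ZR2 {Ω E : Type*} (md : E → Set Ω) : Prop :=
  ∀ (Ψ : E) (M : Set Ω), M ⊆ md Ψ → ∃ Ψ' : E, md Ψ' = M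

/-- Postulate (Unbiased). -/
def Unbiased {Ω E : Type*} (md : E → Set Ω) : Prop :=
  ∀ M : Set Ω, ∃ Ψ : E, md Ψ = M

/-- Maxichoice contraction operator. -/
def IsMaxichoiceContraction {Ω E : Type*} (md : E → Set Ω) (c : E → Set Ω → E) : Prop :=
  IsContraction md c ∧
    ∀ Ψ : E, ∃ r : Ω → Ω → Prop, IsLinRel r ∧ ∀ A : Set Ω,
      (¬ md Ψ ⊆ A → md (c Ψ A) = md Ψ) ∧
      (md Ψ ⊆ A → md (c Ψ A) = md Ψ ∪ minSet r Aᶜ)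

/-- Linear contraction operator: a maxichoice contraction operator based on one
single linear order for all epistemic states. -/
def IsLinearContraction {Ω E : Type*} (md : E → Set Ω) (c : E → Set Ω → E) : Prop :=
  IsContraction md c ∧
    ∃ r : Ω → Ω → Prop, IsLinRel r ∧ ∀ (Ψ : E) (A : Set Ω),
      (¬ md Ψ ⊆ A → md (c Ψ A) = md Ψ) ∧
      (md Ψ ⊆ A → md (c Ψ A) = md Ψ ∪ minSet r Aᶜ)

/-- Full meet contraction operator. -/
def IsFullMeetContraction {Ω E : Type*} (md : E → Set Ω) (c : E → Set Ω → E) : Prop :=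
  IsContraction md c ∧
    ∀ (Ψ : E) (A : Set Ω),
      (¬ md Ψ ⊆ A → md (c Ψ A) = md Ψ) ∧
      (md Ψ ⊆ A → md (c Ψ A) = md Ψ ∪ Aᶜ)

/-- Maxichoice revision operator. -/
def IsMaxichoiceRevision {Ω E : Type*} (md : E → Set Ω) (s : E → Set Ω → E) : Prop :=
  IsRevision md s ∧
    ∀ Ψ : E, ∃ r : Ω → Ω → Prop, IsLinRel r ∧ ∀ A : Set Ω,
      (md Ψ ∩ A ≠ ∅ → md (s Ψ A) = md Ψ ∩ A) ∧
      (md Ψ ∩ A = ∅ → md (s Ψ A) = minSet r A)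

/-- Linear revision operator: a maxichoice revision operator based on one single
linear order for all epistemic states. -/
def IsLinearRevision {Ω E : Type*} (md : E → Set Ω) (s : E → Set Ω → E) : Prop :=
  IsRevision md s ∧
    ∃ r : Ω → Ω → Prop, IsLinRel r ∧ ∀ (Ψ : E) (A : Set Ω),
      (md Ψ ∩ A ≠ ∅ → md (s Ψ A) = md Ψ ∩ A) ∧
      (md Ψ ∩ A = ∅ → md (s Ψ A) = minSet r A)

/-- Full meet revision operator. -/
def IsFullMeetRevision {Ω E : Type*} (md : E → Set Ω) (s : E → Set Ω → E) : Prop :=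
  IsRevision md s ∧
    ∀ (Ψ : E) (A : Set Ω),
      (md Ψ ∩ A ≠ ∅ → md (s Ψ A) = md Ψ ∩ A) ∧
      (md Ψ ∩ A = ∅ → md (s Ψ A) = A)


/-- The epistemic space `E²` over `Ω₂ = Fin 4` (worlds `ω₁, ω₂, ω₃, ω₄`):
five states `Ψ₁, Ψ₂, Ψ₃, Ψ₄, Ψ_⊥` with `mod Ψᵢ = {ωᵢ}` and `mod Ψ_⊥ = ∅`. -/
def md2 : Fin 5 → Set (Fin 4) := ![{0}, {1}, {2}, {3}, ∅]

open Classical in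
/-- pick the least element of `A` as an epistemic state (or `Ψ_⊥` if empty). -/
noncomputable def pick2 (A : Set (Fin 4)) : Fin 5 :=
  if 0 ∈ A then 0 else if 1 ∈ A then 1 else if 2 ∈ A then 2 else if 3 ∈ A then 3 else 4

lemma md2_pick2 (A : Set (Fin 4)) (hA : A.Nonempty) :
    ∃ ω, md2 (pick2 A) = {ω} ∧ ω ∈ A ∧ ∀ ω' ∈ A, ω ≤ ω' := by
  unfold pick2
  by_cases h0 : (0 : Fin 4) ∈ A
  · exact ⟨0, by simp [h0, md2], h0, fun ω' _ => Fin.zero_le _⟩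
  · by_cases h1 : (1 : Fin 4) ∈ A
    · refine ⟨1, by simp [h0, h1, md2], h1, ?_⟩
      intro ω' hω'; fin_cases ω' <;> first | exact absurd hω' h0 | decide
    · by_cases h2 : (2 : Fin 4) ∈ A
      · refine ⟨2, by simp [h0, h1, h2, md2], h2, ?_⟩
        intro ω' hω'; fin_cases ω' <;>
          first | exact absurd hω' h0 | exact absurd hω' h1 | decide
      · by_cases h3 : (3 : Fin 4) ∈ A
        · refine ⟨3, by simp [h0, h1, h2, h3, md2], h3, ?_⟩
          intro ω' hω'; fin_cases ω' <;>
            first | exact absurd hω' h0 | exact absurd hω' h1 | exact absurd hω' h2 | decide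
        · exfalso; obtain ⟨ω, hω⟩ := hA
          fin_cases ω <;> [exact h0 hω; exact h1 hω; exact h2 hω; exact h3 hω]

lemma pick2_empty : md2 (pick2 ∅) = ∅ := by simp [pick2, md2]

lemma md2_pick2_subset (A : Set (Fin 4)) : md2 (pick2 A) ⊆ A := by
  rcases A.eq_empty_or_nonempty with rfl | hA
  · rw [pick2_empty]
  · obtain ⟨ω, hω, hm, _⟩ := md2_pick2 A hA
    rw [hω]; simpa using hm

lemma md2_singleton_or_empty (Ψ : Fin 5) : md2 Ψ = ∅ ∨ ∃ ω, md2 Ψ = {ω} := by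
  fin_cases Ψ <;> simp [md2]

/-- The revision operator: keep `Ψ` if consistent with `A`, otherwise pick least of `A`. -/
noncomputable def srev (Ψ : Fin 5) (A : Set (Fin 4)) : Fin 5 :=
  open Classical in if (md2 Ψ ∩ A).Nonempty then Ψ else pick2 A

lemma srev_pos {Ψ : Fin 5} {A : Set (Fin 4)} (h : (md2 Ψ ∩ A).Nonempty) :
    srev Ψ A = Ψ := by simp [srev, h]

lemma srev_neg {Ψ : Fin 5} {A : Set (Fin 4)} (h : ¬ (md2 Ψ ∩ A).Nonempty) :
    srev Ψ A = pick2 A := by simp [srev, h]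

lemma pick2_inter (A B : Set (Fin 4)) (h : (md2 (pick2 A) ∩ B).Nonempty) :
    md2 (pick2 (A ∩ B)) = md2 (pick2 A) := by
  obtain ⟨x, hxA, hxB⟩ := h
  have hA : A.Nonempty := ⟨x, md2_pick2_subset A hxA⟩
  obtain ⟨ω, hω, hmem, hmin⟩ := md2_pick2 A hA
  rw [hω] at hxA; subst hxA
  have hxAB : x ∈ A ∩ B := ⟨hmem, hxB⟩
  obtain ⟨ω', hω', hmem', hmin'⟩ := md2_pick2 (A ∩ B) ⟨x, hxAB⟩
  have h1 : x ≤ ω' := hmin ω' hmem'.1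
  have h2 : ω' ≤ x := hmin' x hxAB
  rw [hω', hω, le_antisymm h2 h1]
lemma md2_inter_eq (Ψ : Fin 5) (A : Set (Fin 4)) (h : (md2 Ψ ∩ A).Nonempty) :
    md2 Ψ ∩ A = md2 Ψ ∧ md2 Ψ ⊆ A := by
  rcases md2_singleton_or_empty Ψ with he | ⟨ω, hω⟩
  · rw [he] at h; simp at h
  · obtain ⟨x, hx1, hx2⟩ := h
    rw [hω] at hx1 ⊢; subst hx1
    exact ⟨by simp [hx2], by simp [hx2]⟩

theorem E2_revision_realizable_no_fullMeet :
    (∃ s : Fin 5 → Set (Fin 4) → Fin 5, IsRevision md2 s) ∧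
      ¬ (∃ s : Fin 5 → Set (Fin 4) → Fin 5, IsFullMeetRevision md2 s) := by
  constructor
  · refine ⟨srev, fun Ψ A B => ?_⟩
    by_cases h : (md2 Ψ ∩ A).Nonempty
    · obtain ⟨heq, hsub⟩ := md2_inter_eq Ψ A h
      have hs : srev Ψ A = Ψ := srev_pos h
      refine ⟨by rw [hs]; exact hsub, fun _ => by rw [hs, heq], fun _ => ?_, ?_, ?_⟩
      · rw [hs]; rw [← Set.nonempty_iff_ne_empty]
        exact ⟨h.choose, h.choose_spec.1⟩
      all_goals {
        by_cases hB : (md2 Ψ ∩ B).Nonempty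
        · have h2 : (md2 Ψ ∩ (A ∩ B)).Nonempty := by
            obtain ⟨x, hx1, hx2⟩ := hB
            exact ⟨x, hx1, hsub hx1, hx2⟩
          have hs2 : srev Ψ (A ∩ B) = Ψ := srev_pos h2
          obtain ⟨heq2, hsub2⟩ := md2_inter_eq Ψ (A ∩ B) h2
          first
          | rw [hs, hs2]; exact Set.inter_subset_left
          | intro _; rw [hs, hs2]; exact fun x hx => ⟨hx, (hsub2 hx).2⟩
        · rw [Set.not_nonempty_iff_eq_empty] at hB
          have : md2 (srev Ψ A) ∩ B = ∅ := by rw [hs]; exact hB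
          first
          | exact this ▸ (Set.empty_subset _)
          | exact fun hc => absurd this hc }
    · have hs : srev Ψ A = pick2 A := srev_neg h
      rw [Set.not_nonempty_iff_eq_empty] at h
      have h2 : md2 Ψ ∩ (A ∩ B) = ∅ :=
        Set.eq_empty_of_subset_empty (h ▸ Set.inter_subset_inter_right _ Set.inter_subset_left)
      have hs2 : srev Ψ (A ∩ B) = pick2 (A ∩ B) := srev_neg (by rw [h2]; simp)
      refine ⟨hs ▸ md2_pick2_subset A, fun hc => absurd h hc, fun hA => ?_, ?_, ?_⟩
      · rw [hs, ← Set.nonempty_iff_ne_empty]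
        obtain ⟨ω, hω, _⟩ := md2_pick2 A (Set.nonempty_iff_ne_empty.mpr hA)
        exact hω ▸ ⟨ω, rfl⟩
      · intro x hx
        rw [hs] at hx
        rw [hs2, pick2_inter A B ⟨x, hx⟩]
        exact hx.1
      · intro hne
        rw [← Set.nonempty_iff_ne_empty, hs] at hne
        rw [hs2, pick2_inter A B hne, hs]
        obtain ⟨x, hxA, hxB⟩ := hne
        have hA : A.Nonempty := ⟨x, md2_pick2_subset A hxA⟩
        obtain ⟨ω, hω, _, _⟩ := md2_pick2 A hA
        rw [hω] at hxA ⊢; subst hxA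
        intro y hy; rw [hy]; exact ⟨rfl, hxB⟩
  · rintro ⟨s, _, hfm⟩
    have hempty : md2 (0 : Fin 5) ∩ ({1, 2} : Set (Fin 4)) = ∅ := by
      ext ω; fin_cases ω <;> simp [md2]
    have h := (hfm 0 {1, 2}).2 hempty
    have h1 : (1 : Fin 4) ∈ md2 (s 0 {1, 2}) := by rw [h]; simp
    have h2 : (2 : Fin 4) ∈ md2 (s 0 {1, 2}) := by rw [h]; simp
    set Ψ := s 0 ({1, 2} : Set (Fin 4)) with hΨ
    clear_value Ψ
    fin_cases Ψ <;> revert h1 h2 <;> simp [md2]
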